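/- Let T > 0, T_charge ≥ 0, T_Coverage > 0 be real numbers and n ≥ 1 a natural number. If the single-additional-UAV condition of the cycles-with-limited-energy algorithm holds, namely T_Coverage / n ≥ (n+1)·T + T_charge, then n ≤ √(T_Coverage / T). In particular, the number of subareas in any cycle constructed by the cycles-with-limited-energy algorithm is at most √(T_Coverage / T). -/
import Mathlib


/-- If the single-additional-UAV condition of the CLE algorithm holds, i.e.
`T_Coverage / n ≥ (n+1)·T + T_charge`, then `n ≤ √(T_Coverage / T)`. -/
theorem cle_cycle_size_bound
    (T T_charge T_Coverage : ℝ) (n : ℕ)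
    (hT : 0 < T) (hTc : 0 ≤ T_charge) (hCov : 0 < T_Coverage) (hn : 1 ≤ n)
    (h : T_Coverage / (n : ℝ) ≥ ((n : ℝ) + 1) * T + T_charge) :
    (n : ℝ) ≤ Real.sqrt (T_Coverage / T) := by
  have hn0 : (0 : ℝ) < n := by exact_mod_cast Nat.lt_of_lt_of_le Nat.zero_lt_one hn
  rw [Real.le_sqrt (le_of_lt hn0)]
  rw [le_div_iff₀ hT]
  have h1 : (n : ℝ) * (((n : ℝ) + 1) * T + T_charge) ≤ T_Coverage := by
    have := mul_le_mul_of_nonneg_left h (le_of_lt hn0)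
    calc (n : ℝ) * (((n : ℝ) + 1) * T + T_charge) ≤ (n : ℝ) * (T_Coverage / n) := this
      _ = T_Coverage := by field_simp
  nlinarith [hT.le, hn0.le]
  positivity
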